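/- For every integer n ≥ 4, f(n) = f(n−1) or f(n) = f(n+1); equivalently, f(n+1) ≤ f(n−1) + 1 for n ≥ 4. -/

import Mathlib

noncomputable def f (n : ℕ) : ℕ :=
  sInf {k : ℕ | 0 < k ∧ (n.choose k : ℝ) > 2 ^ n / (n + 1)}

lemma mem_S_iff {n k : ℕ} :
    k ∈ {k : ℕ | 0 < k ∧ (n.choose k : ℝ) > 2 ^ n / (n + 1)} ↔
      0 < k ∧ 2 ^ n < n.choose k * (n + 1) := by
  simp only [Set.mem_setOf_eq, gt_iff_lt,
    div_lt_iff₀ (by positivity : (0 : ℝ) < (n : ℝ) + 1)]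
  constructor <;> rintro ⟨h1, h2⟩ <;> exact ⟨h1, by exact_mod_cast h2⟩

lemma witness (n : ℕ) (hn : 3 ≤ n) :
    ∃ k, (0 < k ∧ 2 ^ n < n.choose k * (n + 1)) ∧ 2 * k + 1 ≤ n := by
  rcases Nat.even_or_odd n with ⟨m, hm⟩ | ⟨m, hm⟩
  · -- n = m + m, m ≥ 2
    have hm2 : 2 ≤ m := by omega
    refine ⟨m - 1, ⟨by omega, ?_⟩, by omega⟩
    subst hm
    have hmm : m + m = 2 * m := by ring
    rw [hmm]
    have id1 : (2 * m).choose m * m = (2 * m).choose (m - 1) * (m + 1) := by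
      have h := Nat.choose_succ_right_eq (2 * m) (m - 1)
      have h1 : m - 1 + 1 = m := by omega
      have h2 : 2 * m - (m - 1) = m + 1 := by omega
      rw [h1, h2] at h
      exact h
    have hpow : (2 : ℕ) ^ (2 * m) = 4 ^ m := by
      rw [pow_mul]; norm_num
    rw [hpow]
    rcases lt_or_ge m 4 with h4 | h4
    · interval_cases m <;> decide
    · have key := Nat.four_pow_lt_mul_centralBinom m h4
      unfold Nat.centralBinom at key
      -- key : 4 ^ m < m * (2*m).choose m
      have step : 4 ^ m * (m + 1) < (2 * m).choose (m - 1) * (2 * m + 1) * (m + 1) := by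
        calc 4 ^ m * (m + 1) < m * (2 * m).choose m * (m + 1) :=
              (Nat.mul_lt_mul_right (by omega)).mpr key
          _ = (2 * m).choose (m - 1) * (m + 1) * (m + 1) := by rw [mul_comm m, id1]
          _ ≤ (2 * m).choose (m - 1) * (2 * m + 1) * (m + 1) := by
              have : (2 * m).choose (m - 1) * (m + 1) ≤ (2 * m).choose (m - 1) * (2 * m + 1) :=
                Nat.mul_le_mul_left _ (by omega)
              exact Nat.mul_le_mul_right _ this
      exact Nat.lt_of_mul_lt_mul_right step
  · -- n = 2 * m + 1, m ≥ 1
    have hm1 : 1 ≤ m := by omega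
    refine ⟨m, ⟨by omega, ?_⟩, by omega⟩
    subst hm
    have id1 : (2 * m + 1).choose m * (2 * m + 1 + 1) = (m + 1) * (2 * (m + 1)).choose (m + 1) := by
      have h := Nat.add_one_mul_choose_eq (2 * m + 1) m
      -- h : (2*m+2) * (2*m+1).choose m = (2*m+2).choose (m+1) * (m+1)
      have h2 : 2 * (m + 1) = 2 * m + 1 + 1 := by ring
      rw [h2, mul_comm ((2 * m + 1).choose m) (2 * m + 1 + 1), h, mul_comm]
    rw [id1]
    have hpow : (2 : ℕ) ^ (2 * m + 1) = 2 * 4 ^ m := by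
      rw [pow_succ, pow_mul]; ring_nf
    rw [hpow]
    rcases lt_or_ge m 3 with h3 | h3
    · interval_cases m <;> decide
    · have key := Nat.four_pow_lt_mul_centralBinom (m + 1) (by omega)
      unfold Nat.centralBinom at key
      calc 2 * 4 ^ m < 4 ^ (m + 1) := by
            have h0 : 1 ≤ 4 ^ m := Nat.one_le_pow _ _ (by norm_num)
            rw [pow_succ]; omega
        _ < (m + 1) * (2 * (m + 1)).choose (m + 1) := key

lemma f_spec (n : ℕ) (hn : 3 ≤ n) :
    (0 < f n ∧ 2 ^ n < n.choose (f n) * (n + 1)) ∧ 2 * f n + 1 ≤ n := by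
  obtain ⟨k, hk, hk2⟩ := witness n hn
  have hne : {k : ℕ | 0 < k ∧ (n.choose k : ℝ) > 2 ^ n / (n + 1)}.Nonempty :=
    ⟨k, mem_S_iff.mpr hk⟩
  have hmem := Nat.sInf_mem hne
  have hle : f n ≤ k := Nat.sInf_le (mem_S_iff.mpr hk)
  exact ⟨mem_S_iff.mp hmem, by omega⟩

lemma f_le {n k : ℕ} (h : 0 < k) (h2 : 2 ^ n < n.choose k * (n + 1)) : f n ≤ k :=
  Nat.sInf_le (mem_S_iff.mpr ⟨h, h2⟩)

lemma f_mono (m : ℕ) (hm : 3 ≤ m) : f m ≤ f (m + 1) := by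
  obtain ⟨⟨hpos, hineq⟩, hbd⟩ := f_spec (m + 1) (by omega)
  set k := f (m + 1) with hk
  apply f_le hpos
  obtain ⟨j, hj1, hj2⟩ : ∃ j, k + j = m + 1 ∧ m + 2 ≤ 2 * j := ⟨m + 1 - k, by omega, by omega⟩
  have hid : m.choose k * (m + 1) = (m + 1).choose k * j := by
    have h := Nat.choose_mul_succ_eq m k
    have : m + 1 - k = j := by omega
    rw [this] at h
    exact h
  have key : 2 ^ m * (2 * (m + 2)) < m.choose k * (m + 1) * (2 * (m + 2)) := by
    calc 2 ^ m * (2 * (m + 2)) = 2 ^ (m + 1) * (m + 2) := by rw [pow_succ]; ring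
      _ < (m + 1).choose k * (m + 2) * (m + 2) := (Nat.mul_lt_mul_right (by omega)).mpr hineq
      _ ≤ (m + 1).choose k * (2 * j) * (m + 2) :=
          Nat.mul_le_mul_right _ (Nat.mul_le_mul_left _ hj2)
      _ = (m + 1).choose k * j * (2 * (m + 2)) := by ring
      _ = m.choose k * (m + 1) * (2 * (m + 2)) := by rw [hid]
  exact Nat.lt_of_mul_lt_mul_right key

lemma f_step (m : ℕ) (hm : 3 ≤ m) : f (m + 2) ≤ f m + 1 := by
  obtain ⟨⟨hpos, hineq⟩, hbd⟩ := f_spec m hm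
  set k := f m with hk
  apply f_le (by omega)
  obtain ⟨j, hj1, hj0⟩ : ∃ j, k + j = m + 1 ∧ 0 < j := ⟨m + 1 - k, by omega, by omega⟩
  have hid1 : m.choose k * (m + 1) = (m + 1).choose k * j := by
    have h := Nat.choose_mul_succ_eq m k
    have : m + 1 - k = j := by omega
    rw [this] at h
    exact h
  have hid2 : (m + 2).choose (k + 1) * (k + 1) = (m + 2) * (m + 1).choose k := by
    have h := Nat.add_one_mul_choose_eq (m + 1) k
    have e : m + 1 + 1 = m + 2 := by omega
    rw [e] at h
    exact h.symm
  have hamgm : 4 * ((k + 1) * j) ≤ (m + 2) * (m + 2) := by nlinarith [sq_nonneg (k + 1 - j : ℤ)]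
  -- goal : 2 ^ (m + 2) < (m + 2).choose (k + 1) * (m + 2 + 1)
  have key : 2 ^ (m + 2) * ((k + 1) * j * (m + 1)) <
      (m + 2).choose (k + 1) * (m + 2 + 1) * ((k + 1) * j * (m + 1)) := by
    have e1 : (m + 2).choose (k + 1) * (m + 2 + 1) * ((k + 1) * j * (m + 1)) =
        (m + 3) * ((m + 2) * ((m + 1).choose k * j)) * (m + 1) := by
      calc (m + 2).choose (k + 1) * (m + 2 + 1) * ((k + 1) * j * (m + 1)) =
            (m + 3) * ((m + 2).choose (k + 1) * (k + 1)) * j * (m + 1) := by ring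
        _ = (m + 3) * ((m + 2) * (m + 1).choose k) * j * (m + 1) := by rw [hid2]
        _ = (m + 3) * ((m + 2) * ((m + 1).choose k * j)) * (m + 1) := by ring
    rw [e1, ← hid1]
    calc 2 ^ (m + 2) * ((k + 1) * j * (m + 1)) =
          2 ^ m * (4 * ((k + 1) * j)) * (m + 1) := by rw [pow_succ, pow_succ]; ring
      _ ≤ 2 ^ m * ((m + 2) * (m + 2)) * (m + 1) := by
          exact Nat.mul_le_mul_right _ (Nat.mul_le_mul_left _ hamgm)
      _ < m.choose k * (m + 1) * ((m + 2) * (m + 2)) * (m + 1) := by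
          have h1 : 2 ^ m * ((m + 2) * (m + 2)) < m.choose k * (m + 1) * ((m + 2) * (m + 2)) :=
            (Nat.mul_lt_mul_right (by positivity)).mpr hineq
          exact (Nat.mul_lt_mul_right (by omega)).mpr h1
      _ ≤ (m + 3) * ((m + 2) * (m.choose k * (m + 1))) * (m + 1) := by
          have : m.choose k * (m + 1) * ((m + 2) * (m + 2)) ≤
              m.choose k * (m + 1) * ((m + 2) * (m + 3)) := by
            exact Nat.mul_le_mul_left _ (Nat.mul_le_mul_left _ (by omega))
          calc m.choose k * (m + 1) * ((m + 2) * (m + 2)) * (m + 1) ≤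
                m.choose k * (m + 1) * ((m + 2) * (m + 3)) * (m + 1) :=
                Nat.mul_le_mul_right _ this
            _ = (m + 3) * ((m + 2) * (m.choose k * (m + 1))) * (m + 1) := by ring
  have hposmul : 0 < (k + 1) * j * (m + 1) := by positivity
  exact Nat.lt_of_mul_lt_mul_right key

theorem f_eq_pred_or_succ (n : ℕ) (hn : 4 ≤ n) :
    (f n = f (n - 1) ∨ f n = f (n + 1)) ∧ f (n + 1) ≤ f (n - 1) + 1 := by
  obtain ⟨m, rfl⟩ : ∃ m, n = m + 1 := ⟨n - 1, by omega⟩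
  have hm : 3 ≤ m := by omega
  have h1 : f m ≤ f (m + 1) := f_mono m hm
  have h2 : f (m + 1) ≤ f (m + 1 + 1) := f_mono (m + 1) (by omega)
  have h3 : f (m + 2) ≤ f m + 1 := f_step m hm
  have hs : m + 1 - 1 = m := by omega
  rw [hs]
  have h4 : m + 1 + 1 = m + 2 := rfl
  rw [h4] at h2 ⊢
  constructor
  · omega
  · omega
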